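/- For each i ∈ {1,2,3}, the closed subgroup of Aut(T) generated by a_i is isomorphic to ℤ_2, the group of 2-adic integers. -/

import Mathlib

namespace TreeAut

/-- An automorphism of the infinite rooted binary tree, encoded by its portrait:
at each vertex (a finite word over `Bool`), whether the two subtrees are swapped. -/
def Port : Type := List Bool → Bool

/-- Auxiliary: the action of a tree automorphism on vertices (structural in the vertex). -/
def actAux : List Bool → Port → List Bool
  | [], _ => []
  | b :: l, p => (xor b (p [])) :: actAux l (fun s => p (b :: s))

/-- The action of a tree automorphism on the vertices of the tree. -/
def act (p : Port) (l : List Bool) : List Bool := actAux l p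

/-- Regard a function on vertices as a portrait. -/
def ofFun (f : List Bool → Bool) : Port := f

instance : One Port := ⟨fun _ => false⟩
instance : Mul Port := ⟨fun p q => ofFun fun s => xor (p s) (q (act p s))⟩

lemma one_apply (s : List Bool) : (1 : Port) s = false := rfl
lemma mul_apply (p q : Port) (s : List Bool) : (p * q) s = xor (p s) (q (act p s)) := rfl

/-- The left subtree portrait of `p` under branch `b`. -/
def sub (p : Port) (b : Bool) : Port := ofFun fun s => p (b :: s)

lemma act_nil (p : Port) : act p [] = [] := rfl
lemma act_cons (p : Port) (b : Bool) (l : List Bool) :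
    act p (b :: l) = (xor b (p [])) :: act (sub p b) l := rfl

lemma act_one : ∀ l, act (1 : Port) l = l
  | [] => rfl
  | b :: l => by
      show (xor b false) :: act (sub 1 b) l = b :: l
      have : sub 1 b = (1 : Port) := rfl
      rw [Bool.xor_false, this, act_one l]

lemma sub_mul (p q : Port) (b : Bool) : sub (p * q) b = sub p b * sub q (xor b (p [])) := rfl

lemma act_mul : ∀ (l : List Bool) (p q : Port), act (p * q) l = act q (act p l)
  | [], _, _ => rfl
  | b :: l, p, q => by
      rw [act_cons, act_cons, act_cons, sub_mul, act_mul l]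
      show (xor b (xor (p []) (q []))) :: _ = (xor (xor b (p [])) (q [])) :: _
      rw [Bool.xor_assoc]

/-- Auxiliary: the inverse action (structural in the vertex). -/
def invActAux : List Bool → Port → List Bool
  | [], _ => []
  | b :: l, p => (xor b (p [])) :: invActAux l (fun s => p ((xor b (p [])) :: s))

/-- The inverse of the action of a tree automorphism. -/
def invAct (p : Port) (l : List Bool) : List Bool := invActAux l p

instance : Inv Port := ⟨fun p => ofFun fun s => p (invAct p s)⟩

lemma inv_apply (p : Port) (s : List Bool) : (p⁻¹ : Port) s = p (invAct p s) := rfl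

lemma invAct_cons (p : Port) (b : Bool) (l : List Bool) :
    invAct p (b :: l) = (xor b (p [])) :: invAct (sub p (xor b (p []))) l := rfl

lemma invAct_act : ∀ (l : List Bool) (p : Port), invAct p (act p l) = l
  | [], _ => rfl
  | b :: l, p => by
      rw [act_cons, invAct_cons]
      have hb : xor (xor b (p [])) (p []) = b := by
        rw [Bool.xor_assoc, Bool.xor_self, Bool.xor_false]
      rw [hb]
      exact congrArg _ (invAct_act l _)

lemma sub_inv (p : Port) (b : Bool) : sub (p⁻¹ : Port) b = (sub p (xor b (p [])))⁻¹ := by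
  funext s
  show p (invAct p (b :: s)) = sub p (xor b (p [])) (invAct (sub p (xor b (p []))) s)
  rw [invAct_cons]
  rfl

lemma act_inv : ∀ (l : List Bool) (p : Port), act (p⁻¹ : Port) l = invAct p l
  | [], _ => rfl
  | b :: l, p => by
      rw [act_cons, sub_inv, act_inv l]
      have : (p⁻¹ : Port) [] = p [] := rfl
      rw [this, invAct_cons]

instance : Group Port :=
  Group.ofLeftAxioms
    (fun p q r => by
      funext s
      show xor (xor (p s) (q (act p s))) (r (act (p * q) s))
          = xor (p s) (xor (q (act p s)) (r (act q (act p s))))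
      rw [act_mul, Bool.xor_assoc])
    (fun p => by
      funext s
      show xor false (p (act 1 s)) = p s
      rw [Bool.false_xor, act_one])
    (fun p => by
      funext s
      show xor ((p⁻¹ : Port) s) (p (act (p⁻¹ : Port) s)) = false
      rw [act_inv, inv_apply, Bool.xor_self])

/-- The element `(u,v)τ` of `Aut(T) = (Aut(T) × Aut(T)) ⋊ S₂`: the automorphism acting
as `u` on the left subtree, as `v` on the right subtree, and by `τ` on the first level. -/
def mk (u v : Port) (τ : Bool) : Port := fun s =>
  match s with
  | [] => τ
  | b :: t => if b then v t else u t

/-- `σ`, the automorphism swapping the two first-level subtrees. -/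
def sigma : Port := mk 1 1 true

/-- Auxiliary structural recursion giving the portraits of the three generators. -/
def aT : List Bool → Bool × Bool × Bool
  | [] => (false, true, true)
  | b :: s => (if b then (aT s).2.2 else false,
               if b then (aT s).1 else false,
               if b then false else (aT s).2.1)

/-- The generator `a₁ = (id, a₃)`. -/
def a1 : Port := fun s => (aT s).1
/-- The generator `a₂ = (id, a₁)σ`. -/
def a2 : Port := fun s => (aT s).2.1
/-- The generator `a₃ = (a₂, id)σ`. -/
def a3 : Port := fun s => (aT s).2.2

lemma a1_eq : a1 = mk 1 a3 false := by
  funext s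
  cases s with
  | nil => rfl
  | cons b t => cases b <;> rfl

lemma a2_eq : a2 = mk 1 a1 true := by
  funext s
  cases s with
  | nil => rfl
  | cons b t => cases b <;> rfl

lemma a3_eq : a3 = mk a2 1 true := by
  funext s
  cases s with
  | nil => rfl
  | cons b t => cases b <;> rfl

lemma act_length : ∀ (l : List Bool) (p : Port), (act p l).length = l.length
  | [], _ => rfl
  | _ :: l, p => congrArg Nat.succ (act_length l _)

lemma invAct_length : ∀ (l : List Bool) (p : Port), (invAct p l).length = l.length
  | [], _ => rfl
  | _ :: l, p => congrArg Nat.succ (invAct_length l _)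

/-- The subgroup of `Aut(T)` of automorphisms acting trivially below level `n`;
it is (canonically isomorphic to) `W_n = Aut(T_n)`. -/
def W (n : ℕ) : Subgroup Port where
  carrier := {p | ∀ s : List Bool, n ≤ s.length → p s = false}
  one_mem' := fun _ _ => rfl
  mul_mem' := by
    intro p q hp hq s hs
    show xor (p s) (q (act p s)) = false
    rw [hp s hs, hq _ (by rw [act_length]; exact hs), Bool.xor_self]
  inv_mem' := by
    intro p hp s hs
    show p (invAct p s) = false
    exact hp _ (by rw [invAct_length]; exact hs)

/-- Restriction ("truncation") of a tree automorphism to the first `n` levels. -/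
def trunc (n : ℕ) (p : Port) : Port := fun s => if s.length < n then p s else false

lemma trunc_mem_W (n : ℕ) (p : Port) : trunc n p ∈ W n := by
  intro s hs
  simp only [trunc, if_neg (Nat.not_lt.mpr hs)]

instance : TopologicalSpace Port := inferInstanceAs (TopologicalSpace (List Bool → Bool))

section TopologyLemmas

variable {X : Type*} [TopologicalSpace X]

lemma continuous_bcond {f g h : X → Bool} (hf : Continuous f) (hg : Continuous g)
    (hh : Continuous h) : Continuous fun x => cond (f x) (g x) (h x) := by
  have heq : (fun x => cond (f x) (g x) (h x)) = fun x => if f x = true then g x else h x := by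
    funext x; cases hx : f x <;> simp
  rw [heq]
  refine Continuous.if ?_ hg hh
  have hclopen : IsClopen {x | f x = true} :=
    ⟨(isClosed_discrete {true}).preimage hf, (isOpen_discrete {true}).preimage hf⟩
  intro a ha
  rw [hclopen.frontier_eq] at ha
  exact absurd ha (Set.notMem_empty a)

lemma continuous_bnot {f : X → Bool} (hf : Continuous f) : Continuous fun x => !(f x) := by
  have heq : (fun x => !(f x)) = fun x => cond (f x) false true := by
    funext x; cases f x <;> rfl
  rw [heq]
  exact continuous_bcond hf continuous_const continuous_const

lemma continuous_bxor {f g : X → Bool} (hf : Continuous f) (hg : Continuous g) :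
    Continuous fun x => xor (f x) (g x) := by
  have heq : (fun x => xor (f x) (g x)) = fun x => cond (f x) (!(g x)) (g x) := by
    funext x; cases f x <;> cases g x <;> rfl
  rw [heq]
  exact continuous_bcond hf (continuous_bnot hg) hg

end TopologyLemmas

lemma continuous_sub_comp {X : Type*} [TopologicalSpace X] {f : X → Port} (b : Bool)
    (hf : Continuous f) : Continuous fun x => sub (f x) b := by
  refine continuous_pi fun s => ?_
  exact (continuous_apply (b :: s)).comp hf

lemma continuous_eval_act :
    ∀ s : List Bool, Continuous fun pq : Port × Port => pq.2 (act pq.1 s) := by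
  intro s
  induction s with
  | nil => exact (continuous_apply ([] : List Bool)).comp continuous_snd
  | cons b l ih =>
      have key : (fun pq : Port × Port => pq.2 (act pq.1 (b :: l)))
          = fun pq => cond (xor b (pq.1 []))
              ((fun pq' : Port × Port => pq'.2 (act pq'.1 l)) (sub pq.1 b, sub pq.2 true))
              ((fun pq' : Port × Port => pq'.2 (act pq'.1 l)) (sub pq.1 b, sub pq.2 false)) := by
        funext pq
        rw [act_cons]
        cases hx : xor b (pq.1 []) <;> rfl
      rw [key]
      have hc : Continuous fun pq : Port × Port => xor b (pq.1 []) :=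
        continuous_bxor continuous_const ((continuous_apply ([] : List Bool)).comp continuous_fst)
      refine continuous_bcond hc ?_ ?_ <;>
        exact ih.comp (((continuous_sub_comp b continuous_fst).prodMk
          (continuous_sub_comp _ continuous_snd)))

lemma continuous_eval_inv :
    ∀ s : List Bool, Continuous fun p : Port => p (invAct p s) := by
  intro s
  induction s with
  | nil => exact continuous_apply ([] : List Bool)
  | cons b l ih =>
      have key : (fun p : Port => p (invAct p (b :: l)))
          = fun p => cond (xor b (p []))
              ((fun q : Port => q (invAct q l)) (sub p true))
              ((fun q : Port => q (invAct q l)) (sub p false)) := by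
        funext p
        rw [invAct_cons]
        have : ∀ c : Bool, p (c :: invAct (sub p c) l) = (sub p c) (invAct (sub p c) l) :=
          fun c => rfl
        cases hx : xor b (p []) <;> simp only [hx] <;> exact this _
      rw [key]
      have hc : Continuous fun p : Port => xor b (p []) :=
        continuous_bxor continuous_const (continuous_apply ([] : List Bool))
      exact continuous_bcond hc (ih.comp (continuous_sub_comp true continuous_id))
        (ih.comp (continuous_sub_comp false continuous_id))

instance : IsTopologicalGroup Port where
  continuous_mul := by
    refine continuous_pi fun s => ?_
    exact continuous_bxor ((continuous_apply s).comp continuous_fst) (continuous_eval_act s)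
  continuous_inv := by
    refine continuous_pi fun s => ?_
    exact continuous_eval_inv s


/-! ### Auxiliary development for Statement 15 -/

instance : T2Space Port := inferInstanceAs (T2Space (List Bool → Bool))

/-- The level-`n` congruence subgroup: automorphisms trivial on the first `n` levels. -/
def V (n : ℕ) : Subgroup Port where
  carrier := {p | ∀ s : List Bool, s.length < n → p s = false}
  one_mem' := fun _ _ => rfl
  mul_mem' := by
    intro p q hp hq s hs
    show xor (p s) (q (act p s)) = false
    rw [hp s hs, hq _ (by rw [act_length]; exact hs), Bool.xor_self]
  inv_mem' := by
    intro p hp s hs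
    show p (invAct p s) = false
    exact hp _ (by rw [invAct_length]; exact hs)

lemma mul_mem_V_apply {n : ℕ} {v : Port} (hv : v ∈ V n) (p : Port) {s : List Bool}
    (hs : s.length < n) : (p * v) s = p s := by
  rw [mul_apply, hv _ (by rw [act_length]; exact hs), Bool.xor_false]

lemma act_eq_self : ∀ (s : List Bool) (p : Port),
    (∀ t : List Bool, t.length < s.length → p t = false) → act p s = s
  | [], _, _ => rfl
  | b :: l, p, h => by
    rw [act_cons, h [] (Nat.succ_pos _), Bool.xor_false]
    exact congrArg _ (act_eq_self l (sub p b) fun t ht => h (b :: t) (Nat.succ_lt_succ ht))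

lemma sq_mem_V {n : ℕ} {p : Port} (hp : p ∈ V n) : p ^ 2 ∈ V (n + 1) := by
  intro s hs
  have ha : act p s = s := act_eq_self s p fun t ht => hp t (by omega)
  rw [pow_two]
  show xor (p s) (p (act p s)) = false
  rw [ha, Bool.xor_self]

lemma pow_two_pow_mem_V (p : Port) : ∀ n, p ^ 2 ^ n ∈ V n
  | 0 => fun _ hs => absurd hs (Nat.not_lt_zero _)
  | n + 1 => by
    have h := sq_mem_V (pow_two_pow_mem_V p n)
    rwa [← pow_mul, ← pow_succ] at h

lemma zpow_mem_V (p : Port) {n : ℕ} {a : ℤ} (h : (2 ^ n : ℤ) ∣ a) : p ^ a ∈ V n := by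
  obtain ⟨k, rfl⟩ := h
  have h1 : ((2 ^ n : ℤ)) = ((2 ^ n : ℕ) : ℤ) := by push_cast; ring
  rw [zpow_mul, h1, zpow_natCast]
  exact Subgroup.zpow_mem _ (pow_two_pow_mem_V p n) k

lemma eq_one_of_forall_mem_V {p : Port} (h : ∀ n, p ∈ V n) : p = 1 :=
  funext fun s => (h (s.length + 1) s (Nat.lt_succ_self _) : p s = false)

lemma zpow_apply_congr (x : Port) {n : ℕ} {a b : ℤ} (h : (2 ^ n : ℤ) ∣ a - b)
    {s : List Bool} (hs : s.length < n) : (x ^ a) s = (x ^ b) s := by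
  have hx : x ^ a = x ^ b * x ^ (a - b) := by
    rw [← zpow_add]; exact congrArg (x ^ ·) (by ring)
  rw [hx, mul_mem_V_apply (zpow_mem_V x h) _ hs]

lemma act_congr : ∀ (s : List Bool) (p q : Port),
    (∀ t : List Bool, t.length < s.length → p t = q t) → act p s = act q s
  | [], _, _, _ => rfl
  | b :: l, p, q, h => by
    rw [act_cons, act_cons, h [] (Nat.succ_pos _)]
    exact congrArg _ (act_congr l _ _ fun t ht => h (b :: t) (Nat.succ_lt_succ ht))

/-! ### Structure of the generators -/

lemma a1_nil : a1 [] = false := rfl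
lemma a2_nil : a2 [] = true := rfl
lemma a3_nil : a3 [] = true := rfl

lemma sub_one_eq (b : Bool) : sub 1 b = 1 := rfl
lemma sub_a1_true : sub a1 true = a3 := rfl
lemma sub_a2_false : sub a2 false = 1 := rfl
lemma sub_a2_true : sub a2 true = a1 := rfl
lemma sub_a3_false : sub a3 false = a2 := rfl
lemma sub_a3_true : sub a3 true = 1 := rfl

lemma pow_nil_of_false {p : Port} (h : p [] = false) : ∀ N, (p ^ N) [] = false
  | 0 => rfl
  | N + 1 => by
    rw [pow_succ]
    show xor ((p ^ N) []) (p (act (p ^ N) [])) = false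
    rw [act_nil, pow_nil_of_false h N, h]
    rfl

lemma sq_nil (p : Port) : (p ^ 2) [] = false := by
  rw [pow_two]
  show xor (p []) (p (act p [])) = false
  rw [act_nil, Bool.xor_self]

lemma sub_pow_of_false {p : Port} (h : p [] = false) (b : Bool) :
    ∀ N, sub (p ^ N) b = sub p b ^ N
  | 0 => rfl
  | N + 1 => by
    rw [pow_succ, sub_mul, pow_nil_of_false h N, Bool.xor_false, sub_pow_of_false h b N, pow_succ]

lemma sub_pow_two_mul {p : Port} (h : p [] = true) (b : Bool) (M : ℕ) :
    sub (p ^ (2 * M)) b = (sub p b * sub p (!b)) ^ M := by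
  rw [pow_mul, sub_pow_of_false (sq_nil p) b M]
  congr 1
  rw [pow_two, sub_mul, h, Bool.xor_true]

lemma pow_nil_of_odd {p : Port} (h : p [] = true) {N : ℕ} (hN : N % 2 = 1) :
    (p ^ N) [] = true := by
  obtain ⟨M, rfl⟩ : ∃ M, N = 2 * M + 1 := ⟨N / 2, by omega⟩
  rw [pow_succ]
  show xor ((p ^ (2 * M)) []) (p (act (p ^ (2 * M)) [])) = true
  rw [act_nil, h, pow_mul, pow_nil_of_false (sq_nil p) M]
  rfl

lemma a1_pow_ne_one : ∀ N, 1 ≤ N → a1 ^ N ≠ 1 := by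
  intro N
  induction N using Nat.strong_induction_on with
  | _ N ih =>
    intro hN h
    have h3 : a3 ^ N = 1 := by
      have h' := congrArg (fun p => sub p true) h
      simp only [sub_pow_of_false a1_nil true N, sub_a1_true, sub_one_eq] at h'
      exact h'
    have hNe : N % 2 = 0 := by
      by_contra ho
      have hodd : N % 2 = 1 := by omega
      have := pow_nil_of_odd a3_nil hodd
      rw [h3] at this
      exact Bool.false_ne_true this
    obtain ⟨M, rfl⟩ : ∃ M, N = 2 * M := ⟨N / 2, by omega⟩
    have h2 : a2 ^ M = 1 := by
      have h' := congrArg (fun p => sub p false) h3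
      simp only [sub_pow_two_mul a3_nil false M, sub_a3_false, sub_a3_true, Bool.not_false,
        mul_one, sub_one_eq] at h'
      exact h'
    have hM : 1 ≤ M := by omega
    have hMe : M % 2 = 0 := by
      by_contra ho
      have hodd : M % 2 = 1 := by omega
      have := pow_nil_of_odd a2_nil hodd
      rw [h2] at this
      exact Bool.false_ne_true this
    obtain ⟨L, rfl⟩ : ∃ L, M = 2 * L := ⟨M / 2, by omega⟩
    have h1 : a1 ^ L = 1 := by
      have h' := congrArg (fun p => sub p false) h2
      simp only [sub_pow_two_mul a2_nil false L, sub_a2_false, sub_a2_true, Bool.not_false,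
        one_mul, sub_one_eq] at h'
      exact h'
    exact ih L (by omega) (by omega) h1

lemma a2_pow_ne_one : ∀ N, 1 ≤ N → a2 ^ N ≠ 1 := by
  intro N hN h
  have hNe : N % 2 = 0 := by
    by_contra ho
    have hodd : N % 2 = 1 := by omega
    have := pow_nil_of_odd a2_nil hodd
    rw [h] at this
    exact Bool.false_ne_true this
  obtain ⟨M, rfl⟩ : ∃ M, N = 2 * M := ⟨N / 2, by omega⟩
  have h1 : a1 ^ M = 1 := by
    have h' := congrArg (fun p => sub p false) h
    simp only [sub_pow_two_mul a2_nil false M, sub_a2_false, sub_a2_true, Bool.not_false,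
      one_mul, sub_one_eq] at h'
    exact h'
  exact a1_pow_ne_one M (by omega) h1

lemma a3_pow_ne_one : ∀ N, 1 ≤ N → a3 ^ N ≠ 1 := by
  intro N hN h
  have hNe : N % 2 = 0 := by
    by_contra ho
    have hodd : N % 2 = 1 := by omega
    have := pow_nil_of_odd a3_nil hodd
    rw [h] at this
    exact Bool.false_ne_true this
  obtain ⟨M, rfl⟩ : ∃ M, N = 2 * M := ⟨N / 2, by omega⟩
  have h2 : a2 ^ M = 1 := by
    have h' := congrArg (fun p => sub p false) h
    simp only [sub_pow_two_mul a3_nil false M, sub_a3_false, sub_a3_true, Bool.not_false,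
      mul_one, sub_one_eq] at h'
    exact h'
  exact a2_pow_ne_one M (by omega) h2

/-! ### The homomorphism from `ℤ₂` -/

lemma int_dvd_of_padic {n : ℕ} {a : ℤ} (h : ((2 : ℤ_[2]) ^ n) ∣ (a : ℤ_[2])) :
    (2 ^ n : ℤ) ∣ a := by
  have h2 : ((2 : ℕ) : ℤ_[2]) = (2 : ℤ_[2]) := by norm_cast
  have := (PadicInt.pow_p_dvd_int_iff (p := 2) n a).mp (by rw [h2]; exact h)
  exact_mod_cast this

lemma dvd_sub_appr (z : ℤ_[2]) (n : ℕ) : ((2 : ℤ_[2]) ^ n) ∣ (z - z.appr n) := by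
  have := PadicInt.appr_spec n z
  rw [Ideal.mem_span_singleton] at this
  have h2 : ((2 : ℕ) : ℤ_[2]) = (2 : ℤ_[2]) := by norm_cast
  rwa [h2] at this

/-- The map `z ↦ x^z` from `ℤ₂` to `Aut(T)`, defined via integer approximants. -/
noncomputable def phi (x : Port) (z : ℤ_[2]) : Port :=
  fun s => (x ^ (z.appr (s.length + 1) : ℤ)) s

lemma phi_apply_eq (x : Port) (z : ℤ_[2]) {n : ℕ} {s : List Bool} (hs : s.length < n) :
    phi x z s = (x ^ (z.appr n : ℤ)) s := by
  refine zpow_apply_congr x (n := s.length + 1) ?_ (Nat.lt_succ_self _)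
  apply int_dvd_of_padic
  push_cast
  have h1 := dvd_sub_appr z (s.length + 1)
  have h2 := (pow_dvd_pow (2 : ℤ_[2]) (show s.length + 1 ≤ n from hs)).trans (dvd_sub_appr z n)
  have h3 := h2.sub h1
  convert h3 using 1
  ring

lemma phi_add (x : Port) (z w : ℤ_[2]) : phi x (z + w) = phi x z * phi x w := by
  funext s
  have hlt : s.length < s.length + 1 := lt_add_one s.length
  have h1 : phi x z s = (x ^ (z.appr (s.length + 1) : ℤ)) s := phi_apply_eq x z hlt
  have hact : act (phi x z) s = act (x ^ (z.appr (s.length + 1) : ℤ)) s :=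
    act_congr s _ _ fun t ht => phi_apply_eq x z (by omega)
  have hlen : (act (phi x z) s).length = s.length := act_length s _
  have h2 : phi x w (act (phi x z) s) = (x ^ (w.appr (s.length + 1) : ℤ)) (act (phi x z) s) :=
    phi_apply_eq x w (by rw [hlen]; omega)
  rw [mul_apply, h1, h2, hact]
  have hmul : xor ((x ^ (z.appr (s.length + 1) : ℤ)) s)
        ((x ^ (w.appr (s.length + 1) : ℤ)) (act (x ^ (z.appr (s.length + 1) : ℤ)) s))
      = (x ^ (z.appr (s.length + 1) : ℤ) * x ^ (w.appr (s.length + 1) : ℤ)) s := rfl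
  rw [hmul, ← zpow_add]
  rw [phi_apply_eq x (z + w) hlt]
  refine zpow_apply_congr x (n := s.length + 1) ?_ hlt
  apply int_dvd_of_padic
  have hA := dvd_sub_appr (z + w) (s.length + 1)
  have hB := dvd_sub_appr z (s.length + 1)
  have hC := dvd_sub_appr w (s.length + 1)
  have h3 := (hB.add hC).sub hA
  have heq : z - ((z.appr (s.length + 1) : ℤ_[2])) + (w - ((w.appr (s.length + 1) : ℤ_[2])))
        - (z + w - (((z + w).appr (s.length + 1) : ℤ_[2])))
      = (((((z + w).appr (s.length + 1) : ℤ)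
          - ((z.appr (s.length + 1) : ℤ) + (w.appr (s.length + 1) : ℤ)) : ℤ)) : ℤ_[2]) := by
    push_cast
    ring
  rw [heq] at h3
  exact h3

lemma phi_intCast (x : Port) (k : ℤ) : phi x ((k : ℤ_[2])) = x ^ k := by
  funext s
  refine zpow_apply_congr x (n := s.length + 1) ?_ (Nat.lt_succ_self _)
  apply int_dvd_of_padic
  push_cast
  have h1 := dvd_sub_appr ((k : ℤ_[2])) (s.length + 1)
  have h2 := h1.neg_right
  convert h2 using 1
  ring

lemma continuous_phi (x : Port) : Continuous (phi x) := by
  refine continuous_pi fun s => ?_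
  set n := s.length + 1 with hn
  rw [continuous_iff_continuousAt]
  intro z
  have hev : ∀ᶠ w in nhds z, phi x w s = phi x z s := by
    have hb : Metric.ball z ((2 : ℝ) ^ (-(n : ℤ))) ∈ nhds z :=
      Metric.ball_mem_nhds z (by positivity)
    filter_upwards [hb] with w hw
    have hdvd : ((2 : ℤ_[2]) ^ n) ∣ (w - z) := by
      have hnorm : ‖w - z‖ ≤ (2 : ℝ) ^ (-(n : ℤ)) := by
        have : dist w z < (2 : ℝ) ^ (-(n : ℤ)) := hw
        rw [dist_eq_norm] at this
        exact this.le
      have := (PadicInt.norm_le_pow_iff_mem_span_pow (w - z) n).mp (by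
        have h2 : ((2 : ℕ) : ℝ) = (2 : ℝ) := by norm_cast
        rw [h2]; exact hnorm)
      rw [Ideal.mem_span_singleton] at this
      have h2 : ((2 : ℕ) : ℤ_[2]) = (2 : ℤ_[2]) := by norm_cast
      rwa [h2] at this
    show (x ^ (w.appr (s.length + 1) : ℤ)) s = (x ^ (z.appr (s.length + 1) : ℤ)) s
    refine zpow_apply_congr x (n := n) ?_ (Nat.lt_succ_self _)
    apply int_dvd_of_padic
    push_cast
    have hA := dvd_sub_appr w n
    have hB := dvd_sub_appr z n
    have h3 := (hB.sub hA).add hdvd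
    convert h3 using 1
    rw [hn]
    ring
  exact ContinuousAt.congr continuousAt_const
    (by filter_upwards [hev] with w hw; exact hw.symm)

lemma phi_eq_one_imp {x : Port} (hx : ∀ N, 1 ≤ N → x ^ N ≠ 1) {z : ℤ_[2]}
    (hz : phi x z = 1) : z = 0 := by
  have hmem : ∀ n : ℕ, x ^ ((z.appr n : ℤ)) ∈ V n := by
    intro n s hs
    have h := phi_apply_eq x z hs
    rw [hz] at h
    exact h.symm
  have claim : ∀ m : ℕ, ((2 : ℤ_[2]) ^ m) ∣ z := by
    intro m
    induction m with
    | zero => simp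
    | succ m ihm =>
      obtain ⟨y, hy⟩ := ihm
      rcases em ((2 : ℤ_[2]) ∣ y) with h2 | h2
      · obtain ⟨u, hu⟩ := h2
        exact ⟨u, by rw [hy, hu, pow_succ]; ring⟩
      · exfalso
        have hyu : IsUnit y := by
          rw [PadicInt.isUnit_iff]
          refine le_antisymm (PadicInt.norm_le_one y) ?_
          by_contra hlt
          push_neg at hlt
          refine h2 ?_
          have hdvd := (PadicInt.norm_lt_one_iff_dvd y).mp hlt
          have h2' : ((2 : ℕ) : ℤ_[2]) = (2 : ℤ_[2]) := by norm_cast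
          rwa [h2'] at hdvd
        obtain ⟨yu, hyu'⟩ := hyu
        have hc : y * ((yu⁻¹ : ℤ_[2]ˣ) : ℤ_[2]) = 1 := by
          rw [← hyu']; exact yu.mul_inv
        set c : ℤ_[2] := ((yu⁻¹ : ℤ_[2]ˣ) : ℤ_[2]) with hcdef
        have hpow : x ^ ((2 : ℤ) ^ m) = 1 := by
          apply eq_one_of_forall_mem_V
          intro n
          set d : ℤ := (z.appr n : ℤ) with hd
          set e : ℤ := (c.appr n : ℤ) with he
          have hkey : (2 ^ n : ℤ) ∣ ((2 : ℤ) ^ m - d * e) := by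
            apply int_dvd_of_padic
            push_cast
            have hA := dvd_sub_appr z n
            have hB := dvd_sub_appr c n
            have hzc : (2 : ℤ_[2]) ^ m = z * c := by
              rw [hy, mul_assoc, hc, mul_one]
            have h3 := (hA.mul_right c).add ((hB.mul_left ((z.appr n : ℤ_[2]))))
            have heq : (z - ↑(z.appr n)) * c + ↑(z.appr n) * (c - ↑(c.appr n))
                = (2 : ℤ_[2]) ^ m - ↑(z.appr n) * ↑(c.appr n) := by
              rw [hzc]; ring
            rw [heq] at h3
            convert h3 using 1
            simp only [hd, he, Int.cast_natCast]
          have hsplit : x ^ ((2 : ℤ) ^ m) = x ^ (d * e) * x ^ ((2 : ℤ) ^ m - d * e) := by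
            rw [← zpow_add]
            exact congrArg (x ^ ·) (by ring)
          rw [hsplit]
          exact mul_mem (by rw [zpow_mul]; exact Subgroup.zpow_mem _ (hmem n) e)
            (zpow_mem_V x hkey)
        refine hx (2 ^ m) Nat.one_le_two_pow ?_
        have : x ^ ((2 : ℤ) ^ m) = x ^ ((2 ^ m : ℕ) : ℤ) := by norm_cast
        rw [this, zpow_natCast] at hpow
        exact hpow
  by_contra hz0
  have hpos : 0 < ‖z‖ := by
    rcases (norm_nonneg z).lt_or_eq with h | h
    · exact h
    · exact absurd (norm_eq_zero.mp h.symm) hz0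
  obtain ⟨k, hk⟩ := PadicInt.exists_pow_neg_lt 2 hpos
  have hle : ‖z‖ ≤ (2 : ℝ) ^ (-(k : ℤ)) := by
    have := claim k
    rw [← Ideal.mem_span_singleton] at this
    have h2 : ((2 : ℕ) : ℤ_[2]) = (2 : ℤ_[2]) := by norm_cast
    rw [← h2] at this
    have := (PadicInt.norm_le_pow_iff_mem_span_pow z k).mpr this
    have h2' : ((2 : ℕ) : ℝ) = (2 : ℝ) := by norm_cast
    rwa [h2'] at this
  have h2r : ((2 : ℕ) : ℝ) = (2 : ℝ) := by norm_cast
  rw [h2r] at hk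
  linarith

lemma phi_injective {x : Port} (hx : ∀ N, 1 ≤ N → x ^ N ≠ 1) :
    Function.Injective (phi x) := by
  intro z w h
  have hzw : phi x (z - w) = 1 := by
    have hadd := phi_add x (z - w) w
    rw [sub_add_cancel, h] at hadd
    refine mul_right_cancel (b := phi x w) ?_
    rw [one_mul]
    exact hadd.symm
  have := phi_eq_one_imp hx hzw
  exact sub_eq_zero.mp this


noncomputable def Phi (x : Port) : Multiplicative ℤ_[2] →* Port :=
  MonoidHom.mk' (fun z => phi x (Multiplicative.toAdd z)) (fun z w => phi_add x _ _)

lemma main_iso (x : Port) (hx : ∀ N, 1 ≤ N → x ^ N ≠ 1) :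
    Nonempty ((Subgroup.closure {x}).topologicalClosure ≃* Multiplicative ℤ_[2]) := by
  haveI : CompactSpace (Multiplicative ℤ_[2]) := inferInstanceAs (CompactSpace ℤ_[2])
  have hinj : Function.Injective (Phi x) := by
    intro a b h
    have h' : phi x (Multiplicative.toAdd a) = phi x (Multiplicative.toAdd b) := h
    exact Multiplicative.toAdd.injective (phi_injective hx h')
  have hcont : Continuous (Phi x) := by
    show Continuous fun z : Multiplicative ℤ_[2] => phi x (Multiplicative.toAdd z)
    exact (continuous_phi x).comp continuous_toAdd
  have hrange : (Phi x).range = (Subgroup.closure {x}).topologicalClosure := by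
    apply le_antisymm
    · rintro _ ⟨z, rfl⟩
      have hdense : (Multiplicative.toAdd z) ∈ closure (Set.range (Int.cast : ℤ → ℤ_[2])) :=
        PadicInt.denseRange_intCast _
      have hmem : phi x (Multiplicative.toAdd z) ∈
          closure ((phi x) '' (Set.range (Int.cast : ℤ → ℤ_[2]))) :=
        (image_closure_subset_closure_image (continuous_phi x))
          ⟨Multiplicative.toAdd z, hdense, rfl⟩
      have hsub : (phi x) '' (Set.range (Int.cast : ℤ → ℤ_[2]))
          ⊆ (Subgroup.closure {x} : Set Port) := by
        rintro _ ⟨_, ⟨k, rfl⟩, rfl⟩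
        rw [phi_intCast]
        have hx1 : x ∈ Subgroup.closure ({x} : Set Port) :=
          Subgroup.subset_closure (Set.mem_singleton x)
        exact Subgroup.zpow_mem _ hx1 k
      have hcl : phi x (Multiplicative.toAdd z) ∈ closure (Subgroup.closure {x} : Set Port) :=
        closure_mono hsub hmem
      rwa [← Subgroup.topologicalClosure_coe] at hcl
    · apply Subgroup.topologicalClosure_minimal
      · rw [Subgroup.closure_le]
        intro y hy
        rw [Set.mem_singleton_iff] at hy
        refine ⟨Multiplicative.ofAdd (((1 : ℤ) : ℤ_[2])), ?_⟩
        show phi x (((1 : ℤ) : ℤ_[2])) = y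
        rw [phi_intCast, zpow_one, hy]
      · have hcomp : IsCompact (Set.range (Phi x)) := isCompact_range hcont
        exact hcomp.isClosed
  exact ⟨((MonoidHom.ofInjective hinj).trans (MulEquiv.subgroupCongr hrange)).symm⟩


/-- For each `i ∈ {1,2,3}`, the closed subgroup of `Aut(T)` generated
by `aᵢ` is isomorphic to `ℤ₂`, the (additive) group of 2-adic integers. -/
theorem closure_generator_iso_padicInt :
    Nonempty ((Subgroup.closure {a1}).topologicalClosure ≃* Multiplicative ℤ_[2]) ∧
    Nonempty ((Subgroup.closure {a2}).topologicalClosure ≃* Multiplicative ℤ_[2]) ∧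
    Nonempty ((Subgroup.closure {a3}).topologicalClosure ≃* Multiplicative ℤ_[2]) :=
  ⟨main_iso a1 a1_pow_ne_one, main_iso a2 a2_pow_ne_one, main_iso a3 a3_pow_ne_one⟩

end TreeAut
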